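/- As formal power series in q, ∑_{n ≥ 0} q^{n²} / ((1−q²)(1−q⁴)···(1−q^{2n})) = ∏_{j ≥ 1} (1 + q^{2j−1}). -/

import Mathlib

open PowerSeries

noncomputable def gaussG : ℕ → ℕ → PowerSeries ℚ
  | 0, 0 => 1
  | 0, _ + 1 => 0
  | N + 1, 0 => gaussG N 0
  | N + 1, n + 1 => gaussG N (n + 1) + (X : PowerSeries ℚ) ^ (2 * (N - n)) * gaussG N n

lemma gaussG_zero (N : ℕ) : gaussG N 0 = 1 := by
  induction N with
  | zero => rfl
  | succ N ih => rw [gaussG, ih]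

lemma gaussG_eq_zero : ∀ N n, N < n → gaussG N n = 0 := by
  intro N
  induction N with
  | zero => intro n h; match n, h with | n+1, _ => rfl
  | succ N ih =>
    intro n h
    match n, h with
    | n+1, h =>
      rw [gaussG, ih _ (by omega), ih _ (by omega), mul_zero, add_zero]

lemma prodA (N : ℕ) :
    ∏ j ∈ Finset.Icc 1 N, (1 + (X : PowerSeries ℚ) ^ (2 * j - 1))
      = ∑ n ∈ Finset.range (N + 1), (X : PowerSeries ℚ) ^ (n ^ 2) * gaussG N n := by
  induction N with
  | zero => simp [gaussG_zero]
  | succ N ih =>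
    rw [Finset.prod_Icc_succ_top (by omega : 1 ≤ N + 1), ih]
    have hterm : ∀ n ∈ Finset.range (N + 1),
        (X : PowerSeries ℚ) ^ ((n + 1) ^ 2) * gaussG (N + 1) (n + 1)
          = X ^ ((n + 1) ^ 2) * gaussG N (n + 1)
            + X ^ (2 * N + 1) * (X ^ (n ^ 2) * gaussG N n) := by
      intro n hn
      have hn' : n ≤ N := Finset.mem_range_succ_iff.mp hn
      rw [gaussG, mul_add]
      congr 1
      rw [← mul_assoc, ← pow_add, ← mul_assoc, ← pow_add]
      congr 2
      have h : (n + 1) ^ 2 = n ^ 2 + 2 * n + 1 := by ring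
      omega
    rw [Finset.sum_range_succ' (fun n => (X : PowerSeries ℚ) ^ (n ^ 2) * gaussG (N + 1) n),
      Finset.sum_congr rfl hterm, Finset.sum_add_distrib, ← Finset.mul_sum]
    have h0 : (X : PowerSeries ℚ) ^ (0 ^ 2) * gaussG (N + 1) 0 = 1 := by
      simp [gaussG_zero]
    have h1 : (∑ n ∈ Finset.range (N + 1),
        (X : PowerSeries ℚ) ^ ((n + 1) ^ 2) * gaussG N (n + 1))
          + (X : PowerSeries ℚ) ^ (0 ^ 2) * gaussG N 0
        = ∑ n ∈ Finset.range (N + 1), (X : PowerSeries ℚ) ^ (n ^ 2) * gaussG N n := by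
      rw [← Finset.sum_range_succ' (fun n => (X : PowerSeries ℚ) ^ (n ^ 2) * gaussG N n),
        Finset.sum_range_succ, gaussG_eq_zero N (N + 1) (by omega), mul_zero, add_zero]
    have h2 : (X : PowerSeries ℚ) ^ (0 ^ 2) * gaussG N 0 = 1 := by simp [gaussG_zero]
    rw [h2] at h1
    rw [h0, show 2 * (N + 1) - 1 = 2 * N + 1 from by omega]
    linear_combination -h1

lemma prodB : ∀ N n, n ≤ N →
    gaussG N n * ∏ j ∈ Finset.Icc 1 n, (1 - (X : PowerSeries ℚ) ^ (2 * j))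
      = ∏ k ∈ Finset.Icc (N - n + 1) N, (1 - (X : PowerSeries ℚ) ^ (2 * k)) := by
  intro N
  induction N with
  | zero =>
    intro n hn
    interval_cases n
    simp [gaussG_zero]
  | succ N ih =>
    intro n hn
    match n with
    | 0 =>
      rw [gaussG_zero]
      simp [Finset.Icc_eq_empty_of_lt (by omega : N + 1 < N + 1 - 0 + 1)]
    | k + 1 =>
      have hk : k ≤ N := by omega
      have hrhs : ∏ j ∈ Finset.Icc (N + 1 - (k + 1) + 1) (N + 1),
          (1 - (X : PowerSeries ℚ) ^ (2 * j))
            = (∏ j ∈ Finset.Icc (N - k + 1) N, (1 - (X : PowerSeries ℚ) ^ (2 * j)))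
              * (1 - X ^ (2 * (N + 1))) := by
        rw [show N + 1 - (k + 1) + 1 = N - k + 1 from by omega,
          Finset.prod_Icc_succ_top (by omega : N - k + 1 ≤ N + 1)]
      rw [gaussG, hrhs, Finset.prod_Icc_succ_top (by omega : 1 ≤ k + 1)]
      rcases Nat.lt_or_ge k N with hlt | hge
      · have h1 := ih (k + 1) (by omega)
        rw [show N - (k + 1) + 1 = N - k from by omega,
          Finset.prod_Icc_succ_top (by omega : 1 ≤ k + 1)] at h1
        have h2 : ∏ j ∈ Finset.Icc (N - k) N, (1 - (X : PowerSeries ℚ) ^ (2 * j))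
            = (1 - X ^ (2 * (N - k)))
              * ∏ j ∈ Finset.Icc (N - k + 1) N, (1 - (X : PowerSeries ℚ) ^ (2 * j)) := by
          rw [← Finset.Ico_add_one_right_eq_Icc, ← Finset.Ico_add_one_right_eq_Icc,
            Finset.prod_eq_prod_Ico_succ_bot (by omega : N - k < N + 1)]
        rw [h2] at h1
        have h3 := ih k hk
        have hexp : (X : PowerSeries ℚ) ^ (2 * (N - k)) * X ^ (2 * (k + 1))
            = X ^ (2 * (N + 1)) := by
          rw [← pow_add]; congr 1; omega
        linear_combination h1 + (X : PowerSeries ℚ) ^ (2 * (N - k))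
            * (1 - (X : PowerSeries ℚ) ^ (2 * (k + 1))) * h3
          - (∏ j ∈ Finset.Icc (N - k + 1) N, (1 - (X : PowerSeries ℚ) ^ (2 * j))) * hexp
      · have hkN : k = N := by omega
        subst hkN
        have h3 := ih k le_rfl
        rw [show k - k + 1 = 1 from by omega] at h3
        rw [gaussG_eq_zero k (k + 1) (by omega), show k - k = 0 from by omega, pow_zero]
        linear_combination (1 - (X : PowerSeries ℚ) ^ (2 * (k + 1))) * h3

lemma X_pow_dvd_one_sub_prod (c : ℕ) (s : Finset ℕ) (h : ∀ k ∈ s, c ≤ 2 * k) :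
    (X : PowerSeries ℚ) ^ c ∣ (1 - ∏ k ∈ s, (1 - (X : PowerSeries ℚ) ^ (2 * k))) := by
  classical
  induction s using Finset.induction_on with
  | empty => simp
  | @insert a s hnot ih =>
    rw [Finset.prod_insert hnot]
    have h1 : (1 : PowerSeries ℚ) - (1 - X ^ (2 * a)) * ∏ k ∈ s, (1 - (X : PowerSeries ℚ) ^ (2 * k))
        = (1 - ∏ k ∈ s, (1 - (X : PowerSeries ℚ) ^ (2 * k)))
          + X ^ (2 * a) * ∏ k ∈ s, (1 - (X : PowerSeries ℚ) ^ (2 * k)) := by ring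
    rw [h1]
    exact dvd_add (ih fun k hk => h k (Finset.mem_insert_of_mem hk))
      (Dvd.dvd.mul_right (pow_dvd_pow _ (h a (Finset.mem_insert_self a s))) _)

lemma constCoeff_prod (n : ℕ) :
    constantCoeff (R := ℚ) (∏ j ∈ Finset.Icc 1 n, (1 - (X : PowerSeries ℚ) ^ (2 * j))) = 1 := by
  rw [map_prod]
  apply Finset.prod_eq_one
  intro j hj
  have hj0 : 2 * j ≠ 0 := by have := (Finset.mem_Icc.mp hj).1; omega
  simp [hj0]

lemma coeff_eq_zero_of_X_pow_dvd {f : PowerSeries ℚ} {m : ℕ}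
    (h : (X : PowerSeries ℚ) ^ (m + 1) ∣ f) : PowerSeries.coeff (R := ℚ) m f = 0 :=
  PowerSeries.X_pow_dvd_iff.mp h m (Nat.lt_succ_self m)

theorem slater_distinct_odd_parts (m : ℕ) :
    PowerSeries.coeff (R := ℚ) m
        (∑ n ∈ Finset.range (m + 1),
          (X : PowerSeries ℚ) ^ (n ^ 2)
            * (∏ j ∈ Finset.Icc 1 n, (1 - (X : PowerSeries ℚ) ^ (2 * j)))⁻¹)
      = PowerSeries.coeff (R := ℚ) m
          (∏ j ∈ Finset.Icc 1 (m + 1), (1 + (X : PowerSeries ℚ) ^ (2 * j - 1))) := by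
  rw [prodA (m + 1), map_sum, map_sum]
  conv_rhs => rw [Finset.sum_range_succ]
  have hlast : PowerSeries.coeff (R := ℚ) m
      ((X : PowerSeries ℚ) ^ ((m + 1) ^ 2) * gaussG (m + 1) (m + 1)) = 0 := by
    apply coeff_eq_zero_of_X_pow_dvd
    exact Dvd.dvd.mul_right (pow_dvd_pow _ (by nlinarith : m + 1 ≤ (m + 1) ^ 2)) _
  rw [hlast, add_zero]
  apply Finset.sum_congr rfl
  intro n hn
  have hnm : n ≤ m := Finset.mem_range_succ_iff.mp hn
  set P := ∏ j ∈ Finset.Icc 1 n, (1 - (X : PowerSeries ℚ) ^ (2 * j)) with hPdef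
  have hinv : P * P⁻¹ = 1 :=
    PowerSeries.mul_inv_cancel _ (by rw [hPdef, constCoeff_prod]; exact one_ne_zero)
  have hB := prodB (m + 1) n (by omega)
  rw [show m + 1 - n + 1 = m + 2 - n from by omega] at hB
  set Q := ∏ k ∈ Finset.Icc (m + 2 - n) (m + 1), (1 - (X : PowerSeries ℚ) ^ (2 * k)) with hQdef
  have hg : (X : PowerSeries ℚ) ^ (n ^ 2) * gaussG (m + 1) n
      = X ^ (n ^ 2) * P⁻¹ * Q := by
    rw [← hB]
    linear_combination (-((X : PowerSeries ℚ) ^ (n ^ 2) * gaussG (m + 1) n)) * hinv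
  rw [hg]
  have hdvd1 : (X : PowerSeries ℚ) ^ (2 * (m + 2 - n)) ∣ (1 - Q) := by
    apply X_pow_dvd_one_sub_prod
    intro k hk
    have := (Finset.mem_Icc.mp hk).1
    omega
  obtain ⟨h, hh⟩ := hdvd1
  have hexp : m + 1 ≤ n ^ 2 + 2 * (m + 2 - n) := by
    have h1 : 2 * n ≤ n ^ 2 + 3 := by
      rcases n with _ | j
      · simp
      · have h2 : (j + 1) ^ 2 = j ^ 2 + 2 * j + 1 := by ring
        have h3 : 0 ≤ j ^ 2 := Nat.zero_le _
        rw [h2]; linarith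
    obtain ⟨d, hd⟩ : ∃ d, m + 2 - n = d ∧ n + d = m + 2 := ⟨m + 2 - n, rfl, by omega⟩
    rw [hd.1]
    linarith [hd.2]
  have hdiff : PowerSeries.coeff (R := ℚ) m
      ((X : PowerSeries ℚ) ^ (n ^ 2) * P⁻¹ - X ^ (n ^ 2) * P⁻¹ * Q) = 0 := by
    apply coeff_eq_zero_of_X_pow_dvd
    have heq : (X : PowerSeries ℚ) ^ (n ^ 2) * P⁻¹ - X ^ (n ^ 2) * P⁻¹ * Q
        = X ^ (n ^ 2 + 2 * (m + 2 - n)) * (P⁻¹ * h) := by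
      rw [pow_add]
      linear_combination (X : PowerSeries ℚ) ^ (n ^ 2) * P⁻¹ * hh
    rw [heq]
    exact Dvd.dvd.mul_right (pow_dvd_pow _ hexp) _
  have := map_sub (PowerSeries.coeff (R := ℚ) m) ((X : PowerSeries ℚ) ^ (n ^ 2) * P⁻¹)
    ((X : PowerSeries ℚ) ^ (n ^ 2) * P⁻¹ * Q)
  rw [this] at hdiff
  linarith [hdiff]
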